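/- Let n ≥ 1 and let R := ℂ[X(i,j) : 1 ≤ i,j ≤ n] be the multivariate polynomial ring. Let A be an n×n matrix over R such that A(i,j) = X(i,j) whenever i ≤ j+1 (i.e., all entries on or above the first subdiagonal are the corresponding indeterminates), and for every pair with i > j+1, either A(i,j) = X(i,j) or A(i,j) = 0. Then det(A) is an irreducible element of R. -/

import Mathlib

open MvPolynomial

/-! ### Auxiliary machinery -/

/-- The algebra equivalence splitting off one variable `y` of a multivariate
polynomial ring as a univariate polynomial ring. -/
noncomputable def phiE {σ : Type*} [DecidableEq σ] (y : σ) :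
    MvPolynomial σ ℂ ≃ₐ[ℂ] Polynomial (MvPolynomial {s : σ // s ≠ y} ℂ) :=
  (renameEquiv ℂ (Equiv.optionSubtypeNe y).symm).trans (optionEquivLeft ℂ _)

lemma phiE_X_self {σ : Type*} [DecidableEq σ] (y : σ) :
    phiE y (X y) = Polynomial.X := by
  simp [phiE, Equiv.optionSubtypeNe_symm_self]

lemma phiE_X_ne {σ : Type*} [DecidableEq σ] {y s : σ} (h : s ≠ y) :
    phiE y (X s) = Polynomial.C (X ⟨s, h⟩) := by
  simp [phiE, Equiv.optionSubtypeNe_symm_of_ne h]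

lemma prime_X_cplx {σ : Type*} (s : σ) : Prime (X s : MvPolynomial σ ℂ) := by
  classical
  rw [← MulEquiv.prime_iff (phiE s).toMulEquiv]
  have : (phiE s).toMulEquiv (X s) = (Polynomial.X :
      Polynomial (MvPolynomial {t : σ // t ≠ s} ℂ)) := phiE_X_self s
  rw [this]
  exact Polynomial.prime_X

lemma prime_rename_inj {α σ : Type*} (f : α → σ) (hf : Function.Injective f)
    {p : MvPolynomial α ℂ} (hp : Prime p) : Prime (rename f p) := by
  have h1 : rename f p =
      rename (Subtype.val : Set.range f → σ) (rename (Equiv.ofInjective f hf) p) := by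
    rw [rename_rename]; rfl
  rw [h1]
  exact (prime_rename_iff (Set.range f)).2
    ((MulEquiv.prime_iff (renameEquiv ℂ (Equiv.ofInjective f hf)).toMulEquiv).2 hp)

/-- A linear polynomial `a•X + b` over a domain, with `a` prime and `a ∤ b`,
is irreducible. -/
lemma lin_irred {D : Type*} [CommRing D] [IsDomain D] {a b : D}
    (ha : Prime a) (hab : ¬ a ∣ b) :
    Irreducible (Polynomial.C a * Polynomial.X + Polynomial.C b) := by
  have hdeg : (Polynomial.C a * Polynomial.X + Polynomial.C b).natDegree = 1 := by
    rw [Polynomial.natDegree_add_C, Polynomial.natDegree_C_mul_X a ha.ne_zero]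
  have hne : (Polynomial.C a * Polynomial.X + Polynomial.C b) ≠ 0 := by
    intro h
    rw [h] at hdeg
    simp at hdeg
  have claim : ∀ f g : Polynomial D,
      Polynomial.C a * Polynomial.X + Polynomial.C b = f * g → g.natDegree = 0 →
      IsUnit g := by
    intro f g hfg hg0
    have hc : g = Polynomial.C (g.coeff 0) := Polynomial.eq_C_of_natDegree_eq_zero hg0
    set c := g.coeff 0 with hcdef
    have h1 : a = f.coeff 1 * c := by
      have h := congrArg (fun p => Polynomial.coeff p 1) hfg
      simp only [Polynomial.coeff_add, Polynomial.coeff_C_mul, Polynomial.coeff_X_one,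
        Polynomial.coeff_C, mul_one] at h
      rw [hc] at h
      simpa [Polynomial.coeff_mul_C] using h
    have h0 : b = f.coeff 0 * c := by
      have h := congrArg (fun p => Polynomial.coeff p 0) hfg
      simp only [Polynomial.coeff_add, Polynomial.coeff_C_mul, Polynomial.coeff_X_zero,
        Polynomial.coeff_C, mul_zero, zero_add] at h
      rw [hc] at h
      simpa [Polynomial.coeff_mul_C] using h
    rcases ha.irreducible.isUnit_or_isUnit h1 with hu | hu
    · exfalso
      apply hab
      obtain ⟨v, hv⟩ := isUnit_iff_exists_inv.1 hu
      have hca : c = a * v := by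
        rw [h1, mul_comm (f.coeff 1) c, mul_assoc, hv, mul_one]
      exact dvd_trans ⟨v, hca⟩ ⟨f.coeff 0, by rw [h0, mul_comm]⟩
    · rw [hc]
      exact Polynomial.isUnit_C.2 hu
  constructor
  · intro h
    have := Polynomial.natDegree_eq_zero_of_isUnit h
    omega
  · intro f g hfg
    have hf0 : f ≠ 0 := by rintro rfl; rw [zero_mul] at hfg; exact hne hfg
    have hg0 : g ≠ 0 := by rintro rfl; rw [mul_zero] at hfg; exact hne hfg
    have hdeg2 : f.natDegree + g.natDegree = 1 := by
      rw [← Polynomial.natDegree_mul hf0 hg0, ← hfg, hdeg]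
    rcases Nat.eq_zero_or_pos g.natDegree with hgd | hgd
    · exact Or.inr (claim f g hfg hgd)
    · refine Or.inl (claim g f (hfg.trans (mul_comm f g)) ?_)
      omega

namespace DetAux

variable (n : ℕ)

/-- The distinguished corner variable. -/
abbrev yy : Fin (n + 2) × Fin (n + 2) := (0, 0)

/-- Variables other than the corner one. -/
abbrev τn := {s : Fin (n + 2) × Fin (n + 2) // s ≠ yy n}

variable (A : Matrix (Fin (n + 2)) (Fin (n + 2)) (MvPolynomial (Fin (n + 2) × Fin (n + 2)) ℂ))

open scoped Classical in
/-- The entries of `A`, read in the smaller ring. -/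
noncomputable def lift (s : Fin (n + 2) × Fin (n + 2)) : MvPolynomial (τn n) ℂ :=
  if h : s = yy n then 0 else if A s.1 s.2 = 0 then 0 else X ⟨s, h⟩

/-- The `(0, j)` minor matrices of `A`, over the smaller ring. -/
noncomputable def matJ (j : Fin (n + 2)) :
    Matrix (Fin (n + 1)) (Fin (n + 1)) (MvPolynomial (τn n) ℂ) :=
  fun i k => lift n A (i.succ, j.succAbove k)

/-- Coefficient of the corner variable in `det A`. -/
noncomputable def Nd : MvPolynomial (τn n) ℂ := (matJ n A 0).det

/-- Constant part (w.r.t. the corner variable) of `det A`. -/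
noncomputable def Qd : MvPolynomial (τn n) ℂ :=
  ∑ j : Fin (n + 1),
    (-1) ^ ((j : ℕ) + 1) * lift n A (0, j.succ) * (matJ n A j.succ).det

end DetAux

open DetAux

section Main

variable {n : ℕ}
  {A : Matrix (Fin (n + 2)) (Fin (n + 2)) (MvPolynomial (Fin (n + 2) × Fin (n + 2)) ℂ)}

lemma claim1
    (hupper : ∀ i j : Fin (n + 2), (i : ℕ) ≤ (j : ℕ) + 1 → A i j = X (i, j))
    (hlower : ∀ i j : Fin (n + 2), (j : ℕ) + 1 < (i : ℕ) →
      A i j = X (i, j) ∨ A i j = 0)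
    {s : Fin (n + 2) × Fin (n + 2)} (hs : s ≠ yy n) :
    phiE (yy n) (A s.1 s.2) = Polynomial.C (lift n A s) := by
  have hX : A s.1 s.2 = X s → phiE (yy n) (A s.1 s.2) = Polynomial.C (lift n A s) := by
    intro hA
    rw [hA, phiE_X_ne hs]
    unfold lift
    rw [dif_neg hs, if_neg (by rw [hA]; exact X_ne_zero _)]
  by_cases hij : (s.1 : ℕ) ≤ (s.2 : ℕ) + 1
  · exact hX (by rw [hupper s.1 s.2 hij, Prod.mk.eta])
  · rcases hlower s.1 s.2 (by omega) with hA | hA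
    · exact hX (by rw [hA, Prod.mk.eta])
    · rw [hA]
      unfold lift
      rw [dif_neg hs, if_pos hA, map_zero, map_zero]

lemma evlift (w : τn n → ℂ) {s : Fin (n + 2) × Fin (n + 2)} (hs : s ≠ yy n) :
    aeval w (lift n A s) = if A s.1 s.2 = 0 then 0 else w ⟨s, hs⟩ := by
  unfold lift
  rw [dif_neg hs]
  by_cases h : A s.1 s.2 = 0 <;> simp [h]

lemma main_eq
    (hupper : ∀ i j : Fin (n + 2), (i : ℕ) ≤ (j : ℕ) + 1 → A i j = X (i, j))
    (hlower : ∀ i j : Fin (n + 2), (j : ℕ) + 1 < (i : ℕ) →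
      A i j = X (i, j) ∨ A i j = 0) :
    phiE (yy n) A.det =
      Polynomial.C (Nd n A) * Polynomial.X + Polynomial.C (Qd n A) := by
  have hdet : phiE (yy n) A.det = (A.map (phiE (yy n))).det := by
    have h := (phiE (yy n)).toAlgHom.map_det A
    rw [AlgHom.mapMatrix_apply] at h
    simpa using h
  have hsub : ∀ j : Fin (n + 2),
      (A.map (phiE (yy n))).submatrix Fin.succ j.succAbove
        = (matJ n A j).map Polynomial.C := by
    intro j
    ext i k
    have hs : ((i.succ : Fin (n + 2)), j.succAbove k) ≠ yy n := by
      intro h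
      exact Fin.succ_ne_zero i (congrArg Prod.fst h)
    simp only [Matrix.submatrix_apply, Matrix.map_apply]
    rw [claim1 hupper hlower hs]
    rfl
  have hdetC : ∀ j : Fin (n + 2),
      ((matJ n A j).map Polynomial.C).det = Polynomial.C ((matJ n A j).det) := by
    intro j
    rw [RingHom.map_det (Polynomial.C) (matJ n A j), RingHom.mapMatrix_apply]
  have h00 : (A.map (phiE (yy n))) 0 0 = Polynomial.X := by
    have h : A 0 0 = X (yy n) := hupper 0 0 (by simp)
    simp only [Matrix.map_apply, h, phiE_X_self]
  have h0j : ∀ j : Fin (n + 1),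
      (A.map (phiE (yy n))) 0 j.succ = Polynomial.C (lift n A (0, j.succ)) := by
    intro j
    have hs : (((0 : Fin (n + 2))), (j.succ : Fin (n + 2))) ≠ yy n := by
      intro h
      exact Fin.succ_ne_zero j (congrArg Prod.snd h)
    simpa only [Matrix.map_apply] using claim1 hupper hlower hs
  rw [hdet, Matrix.det_succ_row_zero, Fin.sum_univ_succ, h00, hsub 0, hdetC 0]
  have hsum : ∀ j : Fin (n + 1),
      (-1 : Polynomial (MvPolynomial (τn n) ℂ)) ^ (((j.succ : Fin (n + 2))) : ℕ) *
          (A.map (phiE (yy n))) 0 j.succ *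
          ((A.map (phiE (yy n))).submatrix Fin.succ ((j.succ : Fin (n + 2))).succAbove).det
        = Polynomial.C
            ((-1) ^ ((j : ℕ) + 1) * lift n A (0, j.succ) * (matJ n A j.succ).det) := by
    intro j
    rw [hsub j.succ, hdetC j.succ, h0j j, Fin.val_succ, map_mul, map_mul, map_pow,
      map_neg, map_one]
  rw [Finset.sum_congr rfl (fun j _ => hsum j)]
  rw [← map_sum]
  unfold Qd Nd
  simp only [Fin.val_zero, pow_zero, one_mul]
  ring

lemma Nd_ne_zero
    (hupper : ∀ i j : Fin (n + 2), (i : ℕ) ≤ (j : ℕ) + 1 → A i j = X (i, j)) :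
    Nd n A ≠ 0 := by
  set w2 : τn n → ℂ := fun t => if t.val.1 = t.val.2 then 1 else 0 with hw2
  have hm : (matJ n A 0).map (aeval w2) = (1 : Matrix (Fin (n + 1)) (Fin (n + 1)) ℂ) := by
    ext i k
    have hs : ((i.succ : Fin (n + 2)), (k.succ : Fin (n + 2))) ≠ yy n := by
      intro h; exact Fin.succ_ne_zero i (congrArg Prod.fst h)
    have hentry : (matJ n A 0) i k = lift n A (i.succ, k.succ) := by
      unfold matJ; rw [Fin.zero_succAbove]
    rw [Matrix.map_apply, hentry, evlift w2 hs]
    by_cases hik : i = k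
    · subst hik
      rw [if_neg, Matrix.one_apply_eq]
      · simp [hw2]
      · rw [hupper i.succ i.succ (by omega)]
        exact X_ne_zero _
    · rw [Matrix.one_apply_ne hik]
      have hne : ((i.succ : Fin (n + 2)) : ℕ) ≠ ((k.succ : Fin (n + 2)) : ℕ) := by
        simp only [Fin.val_succ]
        intro h
        exact hik (Fin.ext (by omega))
      by_cases hA : A i.succ k.succ = 0
      · simp [hA]
      · rw [if_neg hA]
        simp only [hw2]
        rw [if_neg (by intro h; exact hne (congrArg Fin.val h))]
  intro h
  have h1 : aeval w2 (Nd n A) = 1 := by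
    unfold Nd
    rw [(aeval w2).map_det, AlgHom.mapMatrix_apply, hm, Matrix.det_one]
  rw [h, map_zero] at h1
  exact zero_ne_one h1

lemma Nd_prime
    (IH : ∀ (B : Matrix (Fin (n + 1)) (Fin (n + 1))
        (MvPolynomial (Fin (n + 1) × Fin (n + 1)) ℂ)),
      (∀ i j : Fin (n + 1), (i : ℕ) ≤ (j : ℕ) + 1 → B i j = X (i, j)) →
      (∀ i j : Fin (n + 1), (j : ℕ) + 1 < (i : ℕ) → B i j = X (i, j) ∨ B i j = 0) →
      Irreducible B.det)
    (hupper : ∀ i j : Fin (n + 2), (i : ℕ) ≤ (j : ℕ) + 1 → A i j = X (i, j)) :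
    Prime (Nd n A) := by
  classical
  set B : Matrix (Fin (n + 1)) (Fin (n + 1)) (MvPolynomial (Fin (n + 1) × Fin (n + 1)) ℂ) :=
    fun i k => if A i.succ k.succ = 0 then 0 else X (i, k) with hB
  have hBu : ∀ i j : Fin (n + 1), (i : ℕ) ≤ (j : ℕ) + 1 → B i j = X (i, j) := by
    intro i j hij
    have hA : A i.succ j.succ = X (i.succ, j.succ) := by
      apply hupper
      simp only [Fin.val_succ]
      omega
    simp only [hB]
    rw [if_neg (by rw [hA]; exact X_ne_zero _)]
  have hBl : ∀ i j : Fin (n + 1), (j : ℕ) + 1 < (i : ℕ) → B i j = X (i, j) ∨ B i j = 0 := by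
    intro i j _
    by_cases hA : A i.succ j.succ = 0
    · exact Or.inr (by simp [hB, hA])
    · exact Or.inl (by simp [hB, hA])
  have hBprime : Prime B.det :=
    (UniqueFactorizationMonoid.irreducible_iff_prime).1 (IH B hBu hBl)
  set ι : Fin (n + 1) × Fin (n + 1) → τn n :=
    fun p => ⟨(p.1.succ, p.2.succ), fun h => Fin.succ_ne_zero p.1 (congrArg Prod.fst h)⟩
    with hι
  have hιinj : Function.Injective ι := by
    intro p q h
    have h2 : ((p.1.succ : Fin (n + 2)), (p.2.succ : Fin (n + 2)))
        = (q.1.succ, q.2.succ) := congrArg Subtype.val h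
    have ha : (p.1.succ : Fin (n + 2)) = q.1.succ := congrArg Prod.fst h2
    have hb : (p.2.succ : Fin (n + 2)) = q.2.succ := congrArg Prod.snd h2
    exact Prod.ext (Fin.succ_injective _ ha) (Fin.succ_injective _ hb)
  have hren : rename ι B.det = Nd n A := by
    unfold Nd
    rw [(rename ι).map_det, AlgHom.mapMatrix_apply]
    congr 1
    ext i k : 1
    simp only [Matrix.map_apply]
    simp only [hB]
    by_cases hA : A i.succ k.succ = 0
    · rw [if_pos hA, map_zero]
      unfold matJ lift
      rw [Fin.zero_succAbove,
        dif_neg (fun h => Fin.succ_ne_zero i (congrArg Prod.fst h)), if_pos hA]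
    · rw [if_neg hA, rename_X]
      unfold matJ lift
      rw [Fin.zero_succAbove,
        dif_neg (fun h => Fin.succ_ne_zero i (congrArg Prod.fst h)), if_neg hA]
  rw [← hren]
  exact prime_rename_inj ι hιinj hBprime

lemma swap_val (i j : Fin (n + 2)) :
    Equiv.swap (0 : Fin (n + 2)) 1 i = j ↔
      ((i = 0 ∧ j = 1) ∨ (i = 1 ∧ j = 0) ∨ (i = j ∧ ¬ i = 0 ∧ ¬ i = 1)) := by
  by_cases hi0 : i = 0
  · subst hi0
    rw [Equiv.swap_apply_left]
    constructor
    · intro h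
      exact Or.inl ⟨rfl, h.symm⟩
    · rintro (⟨_, h⟩ | ⟨h, _⟩ | ⟨_, h, _⟩)
      exacts [h.symm, absurd h zero_ne_one, absurd rfl h]
  · by_cases hi1 : i = 1
    · subst hi1
      rw [Equiv.swap_apply_right]
      constructor
      · intro h
        exact Or.inr (Or.inl ⟨rfl, h.symm⟩)
      · rintro (⟨h, _⟩ | ⟨_, h⟩ | ⟨_, _, h⟩)
        exacts [absurd h.symm zero_ne_one, h.symm, absurd rfl h]
    · rw [Equiv.swap_apply_of_ne_of_ne hi0 hi1]
      constructor
      · intro h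
        exact Or.inr (Or.inr ⟨h, hi0, hi1⟩)
      · rintro (⟨h, _⟩ | ⟨h, _⟩ | ⟨h, _, _⟩)
        exacts [absurd h hi0, absurd h hi1, h]

lemma Nd_not_dvd
    (hupper : ∀ i j : Fin (n + 2), (i : ℕ) ≤ (j : ℕ) + 1 → A i j = X (i, j))
    (hlower : ∀ i j : Fin (n + 2), (j : ℕ) + 1 < (i : ℕ) →
      A i j = X (i, j) ∨ A i j = 0) :
    ¬ Nd n A ∣ Qd n A := by
  classical
  set w1 : τn n → ℂ := fun t =>
    if t.val = ((0 : Fin (n + 2)), (1 : Fin (n + 2))) ∨ t.val = (1, 0) ∨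
        (t.val.1 = t.val.2 ∧ ¬ t.val.1 = 0 ∧ ¬ t.val.1 = 1) then 1 else 0 with hw1
  have hN0 : aeval w1 (Nd n A) = 0 := by
    unfold Nd
    rw [(aeval w1).map_det, AlgHom.mapMatrix_apply]
    apply Matrix.det_eq_zero_of_row_eq_zero 0
    intro k
    have hs : (((0 : Fin (n + 1)).succ : Fin (n + 2)), (k.succ : Fin (n + 2))) ≠ yy n :=
      fun h => Fin.succ_ne_zero (0 : Fin (n + 1)) (congrArg Prod.fst h)
    have hentry : (matJ n A 0) 0 k = lift n A ((0 : Fin (n + 1)).succ, k.succ) := by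
      unfold matJ; rw [Fin.zero_succAbove]
    rw [Matrix.map_apply, hentry, evlift w1 hs]
    by_cases hA : A (0 : Fin (n + 1)).succ k.succ = 0
    · rw [if_pos hA]
    · rw [if_neg hA]
      simp only [hw1]
      rw [if_neg]
      rintro (h | h | ⟨_, _, h3⟩)
      · exact Fin.succ_ne_zero (0 : Fin (n + 1)) (congrArg Prod.fst h)
      · exact Fin.succ_ne_zero k (congrArg Prod.snd h)
      · exact h3 Fin.succ_zero_eq_one'
  have hQ : aeval w1 (Qd n A) = (-1 : ℂ) := by
    have hme := main_eq hupper hlower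
    have h2 : aeval w1 (Polynomial.eval 0 (phiE (yy n) A.det)) = aeval w1 (Qd n A) := by
      rw [hme]; simp
    set χ : MvPolynomial (Fin (n + 2) × Fin (n + 2)) ℂ →+* ℂ :=
      ((aeval w1 : MvPolynomial (τn n) ℂ →ₐ[ℂ] ℂ).toRingHom.comp
        (Polynomial.evalRingHom (0 : MvPolynomial (τn n) ℂ))).comp
        (phiE (yy n)).toAlgHom.toRingHom with hχ
    have hχdet : χ A.det = (A.map χ).det := by
      rw [RingHom.map_det, RingHom.mapMatrix_apply]
    have hχval : χ A.det = aeval w1 (Polynomial.eval 0 (phiE (yy n) A.det)) := rfl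
    have hmap : A.map χ =
        fun i j => if Equiv.swap (0 : Fin (n + 2)) 1 i = j then (1 : ℂ) else 0 := by
      ext i j
      rw [Matrix.map_apply]
      by_cases hy' : ((i, j) : Fin (n + 2) × Fin (n + 2)) = yy n
      · have hi : i = 0 := congrArg Prod.fst hy'
        have hj : j = 0 := congrArg Prod.snd hy'
        subst hi; subst hj
        have hA : A 0 0 = X (yy n) := hupper 0 0 (by simp)
        have hz : χ (X (yy n)) = 0 := by
          have : χ (X (yy n)) = aeval w1 (Polynomial.eval 0 (phiE (yy n) (X (yy n)))) := rfl
          rw [this, phiE_X_self]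
          simp
        rw [hA, hz, if_neg]
        rw [Equiv.swap_apply_left]
        exact fun h => zero_ne_one h.symm
      · have hχX : χ (A i j) = if A i j = 0 then 0 else w1 ⟨(i, j), hy'⟩ := by
          have hcl := claim1 hupper hlower (s := (i, j)) hy'
          have : χ (A i j) = aeval w1 (Polynomial.eval 0 (phiE (yy n) (A i j))) := rfl
          rw [this, hcl]
          simp only [Polynomial.eval_C]
          exact evlift w1 hy'
        rw [hχX]
        by_cases hA : A i j = 0
        · rw [if_pos hA, if_neg]
          have hlow : (j : ℕ) + 1 < (i : ℕ) := by
            by_contra hcon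
            have h := hupper i j (by omega)
            rw [hA] at h
            exact X_ne_zero _ h.symm
          have hv0 : ((0 : Fin (n + 2)) : ℕ) = 0 := by simp
          have hv1 : ((1 : Fin (n + 2)) : ℕ) = 1 := by simp
          rw [swap_val]
          rintro (⟨h1, h2⟩ | ⟨h1, h2⟩ | ⟨h1, h2, h3⟩)
          · have := congrArg Fin.val h1
            omega
          · have := congrArg Fin.val h1
            omega
          · have := congrArg Fin.val h1
            omega
        · rw [if_neg hA]
          simp only [hw1]
          refine if_congr ?_ rfl rfl
          rw [swap_val]
          simp [Prod.ext_iff]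
    have hdetswap :
        Matrix.det (fun i j => if Equiv.swap (0 : Fin (n + 2)) 1 i = j then (1 : ℂ) else 0)
          = -1 := by
      have h01 : (0 : Fin (n + 2)) ≠ 1 := zero_ne_one
      have hrw : (fun i j => if Equiv.swap (0 : Fin (n + 2)) 1 i = j then (1 : ℂ) else 0)
          = (1 : Matrix (Fin (n + 2)) (Fin (n + 2)) ℂ).submatrix (⇑(Equiv.swap 0 1)) id := by
        ext i j
        simp [Matrix.submatrix_apply, Matrix.one_apply]
      rw [hrw, Matrix.det_permute, Matrix.det_one, Equiv.Perm.sign_swap h01]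
      simp
    rw [← h2, ← hχval, hχdet, hmap, hdetswap]
  rintro ⟨c, hc⟩
  have heq := congrArg (aeval w1) hc
  rw [map_mul, hN0, zero_mul, hQ] at heq
  norm_num at heq

end Main

lemma key_det_irred : ∀ (n : ℕ)
    (A : Matrix (Fin (n + 1)) (Fin (n + 1)) (MvPolynomial (Fin (n + 1) × Fin (n + 1)) ℂ)),
    (∀ i j : Fin (n + 1), (i : ℕ) ≤ (j : ℕ) + 1 → A i j = X (i, j)) →
    (∀ i j : Fin (n + 1), (j : ℕ) + 1 < (i : ℕ) → A i j = X (i, j) ∨ A i j = 0) →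
    Irreducible A.det := by
  intro n
  induction n with
  | zero =>
    intro A hupper _
    rw [Matrix.det_fin_one, hupper 0 0 (by simp)]
    exact (prime_X_cplx _).irreducible
  | succ m IH =>
    intro A hupper hlower
    have hprime := Nd_prime (A := A) IH hupper
    have hndvd := Nd_not_dvd (A := A) hupper hlower
    have hirr := lin_irred hprime hndvd
    rw [← main_eq hupper hlower] at hirr
    exact (MulEquiv.irreducible_iff (phiE (yy m))).1 hirr

theorem det_irreducible_of_subdiagonal_pattern
    (n : ℕ) (hn : 1 ≤ n)
    (A : Matrix (Fin n) (Fin n) (MvPolynomial (Fin n × Fin n) ℂ))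
    (hupper : ∀ i j : Fin n, (i : ℕ) ≤ (j : ℕ) + 1 → A i j = X (i, j))
    (hlower : ∀ i j : Fin n, (j : ℕ) + 1 < (i : ℕ) →
      A i j = X (i, j) ∨ A i j = 0) :
    Irreducible A.det := by
  obtain ⟨m, rfl⟩ : ∃ m, n = m + 1 := ⟨n - 1, by omega⟩
  exact key_det_irred m A hupper hlower
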